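/- arXiv:2005.08617 — 3 statements merged into one kernel-verified Lean document; each statement's English description precedes it below -/
import Mathlib

section
/- For any degrees 2 ≤ i ≤ d-2, there exist homogeneous polynomials f of degree i and g of degree d-i in n+1 variables (e.g., Fermat polynomials) such that f·g has strength 1 but slice rank ⌈(n+1)/2⌉; in particular, the gap between slice rank and strength of reducible forms is unbounded as n → ∞. -/
open MvPolynomial

noncomputable def sliceRank {k : Type*} [Field k] {σ : Type*} (d : ℕ)
    (f : MvPolynomial σ k) : ℕ :=
  sInf {r : ℕ | ∃ ℓ g : Fin r → MvPolynomial σ k,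
    (∀ i, (ℓ i).IsHomogeneous 1) ∧ (∀ i, (g i).IsHomogeneous (d - 1)) ∧
    f = ∑ i, ℓ i * g i}

noncomputable def strength {k : Type*} [Field k] {σ : Type*} (d : ℕ)
    (f : MvPolynomial σ k) : ℕ :=
  sInf {r : ℕ | ∃ (g h : Fin r → MvPolynomial σ k) (e : Fin r → ℕ),
    (∀ i, 1 ≤ e i ∧ e i ≤ d - 1) ∧
    (∀ i, (g i).IsHomogeneous (e i)) ∧ (∀ i, (h i).IsHomogeneous (d - e i)) ∧
    f = ∑ i, g i * h i}

namespace GapAux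

open Module Submodule

lemma sum_range_two_mul {M : Type*} [AddCommMonoid M] (F : ℕ → M) (q : ℕ) :
    ∑ j ∈ Finset.range (2 * q), F j = ∑ m ∈ Finset.range q, (F (2 * m) + F (2 * m + 1)) := by
  induction q with
  | zero => simp
  | succ q ih =>
    rw [show 2 * (q + 1) = (2 * q + 1) + 1 by ring, Finset.sum_range_succ, Finset.sum_range_succ,
      ih, Finset.sum_range_succ, add_assoc]

lemma exists_single_of_degree_one {σ : Type*} (m : σ →₀ ℕ) (hm : m.degree = 1) :
    ∃ x, m = Finsupp.single x 1 := by
  classical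
  have hne : m ≠ 0 := by
    intro h; rw [h, map_zero] at hm; exact one_ne_zero hm.symm
  obtain ⟨x, hx⟩ := Finsupp.support_nonempty_iff.2 hne
  have hx1 : 1 ≤ m x := Nat.one_le_iff_ne_zero.2 (Finsupp.mem_support_iff.1 hx)
  have hsum : m x + ∑ y ∈ m.support.erase x, m y = 1 := by
    rw [Finset.add_sum_erase _ _ hx]; exact hm
  have hmx : m x = 1 := by omega
  have hrest : ∀ y ∈ m.support.erase x, m y = 0 := by
    rw [← Finset.sum_eq_zero_iff]; omega
  refine ⟨x, Finsupp.ext fun y => ?_⟩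
  by_cases hyx : y = x
  · subst hyx; simp [hmx]
  · rw [Finsupp.single_apply, if_neg (fun h => hyx h.symm)]
    by_cases hy : y ∈ m.support
    · exact hrest y (Finset.mem_erase.2 ⟨hyx, hy⟩)
    · exact Finsupp.notMem_support_iff.1 hy

lemma eq_sum_of_isHomogeneous_one {k : Type*} [Field k] {N : ℕ}
    {p : MvPolynomial (Fin N) k} (hp : p.IsHomogeneous 1) :
    p = ∑ x : Fin N, C (coeff (Finsupp.single x 1) p) * X x := by
  classical
  apply MvPolynomial.ext
  intro m
  rw [coeff_sum]
  simp_rw [coeff_C_mul, coeff_X', mul_ite, mul_one, mul_zero]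
  by_cases hm : m.degree = 1
  · obtain ⟨x₀, rfl⟩ := exists_single_of_degree_one m hm
    have hcond : ∀ x : Fin N, (Finsupp.single x (1:ℕ) = Finsupp.single x₀ 1) = (x = x₀) :=
      fun x => propext ⟨fun h => Finsupp.single_left_injective one_ne_zero h,
        by rintro rfl; rfl⟩
    simp_rw [hcond]
    rw [Finset.sum_ite_eq' Finset.univ x₀ (fun x => coeff (Finsupp.single x 1) p),
      if_pos (Finset.mem_univ _)]
  · rw [hp.coeff_eq_zero hm, Finset.sum_eq_zero]
    intro x _
    rw [if_neg]
    intro h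
    apply hm
    rw [← h]
    simp [Finsupp.degree_single]

lemma key {k : Type*} [Field k] [CharZero k] {t N j : ℕ} (hj : 2 ≤ j)
    (w : Fin t → Fin N → k) (hw : LinearIndependent k w)
    (h0 : (∑ x : Fin N, (∑ s : Fin t, C (w s x) * X s : MvPolynomial (Fin t) k) ^ j) = 0) :
    2 * t ≤ N := by
  classical
  set P := MvPolynomial (Fin t) k
  set L : Fin N → P := fun x => ∑ s : Fin t, C (w s x) * X s with hL
  have hder : ∀ s x, pderiv s (L x) = C (w s x) := by
    intro s x
    simp only [hL]
    rw [map_sum, Finset.sum_eq_single s]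
    · rw [pderiv_C_mul, pderiv_X_self, mul_one]
    · intro u _ hu; rw [pderiv_C_mul, pderiv_X_of_ne hu, mul_zero]
    · intro h; exact absurd (Finset.mem_univ s) h
  have hrel : ∀ s : Fin t, ∑ x : Fin N, C (w s x) * (L x) ^ (j - 1) = (0 : P) := by
    intro s
    have h1 := congrArg (pderiv s) h0
    rw [map_sum, map_zero] at h1
    have h2 : ∀ x : Fin N, pderiv s ((L x) ^ j) = (j : k) • (C (w s x) * (L x) ^ (j - 1)) := by
      intro x
      rw [pderiv_pow, hder s x, smul_eq_C_mul,
        show ((j : P)) = C ((j : k)) from (map_natCast C j).symm]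
      ring
    rw [Finset.sum_congr rfl (fun x _ => h2 x), ← Finset.smul_sum] at h1
    have hj0 : (j : k) ≠ 0 := Nat.cast_ne_zero.2 (by omega)
    exact (smul_eq_zero.mp h1).resolve_left hj0
  set v : Fin N → P := fun x => (L x) ^ (j - 1) with hv
  set Φ : (Fin N → k) →ₗ[k] P := Fintype.linearCombination k v with hΦ
  have hΦapply : ∀ c : Fin N → k, Φ c = ∑ x, c x • v x := fun c => rfl
  have hker : ∀ s, Φ (w s) = 0 := by
    intro s
    rw [hΦapply]
    rw [Finset.sum_congr rfl (fun x _ => smul_eq_C_mul (v x) (w s x))]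
    exact hrel s
  have hspanker : span k (Set.range w) ≤ LinearMap.ker Φ := by
    rw [Submodule.span_le]
    rintro _ ⟨s, rfl⟩
    exact LinearMap.mem_ker.2 (hker s)
  have htker : t ≤ finrank k (LinearMap.ker Φ) := by
    have h1 : finrank k (span k (Set.range w)) = t := by
      rw [finrank_span_eq_card hw, Fintype.card_fin]
    have h2 := Submodule.finrank_mono (R := k) hspanker
    omega
  set col : Fin N → (Fin t → k) := fun x s => w s x with hcoldef
  have hcol : span k (Set.range col) = ⊤ := by
    set M : Matrix (Fin t) (Fin N) k := Matrix.of w with hM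
    have hT : Set.range M.transpose = Set.range col := rfl
    have hR : Set.range (M : Matrix (Fin t) (Fin N) k) = Set.range w := rfl
    have h1 := Matrix.rank_eq_finrank_span_cols M
    rw [show Set.range M.col = Set.range col from rfl] at h1
    have h2 := Matrix.rank_eq_finrank_span_cols M.transpose
    rw [show Set.range M.transpose.col = Set.range w from rfl, finrank_span_eq_card hw, Fintype.card_fin] at h2
    have h3 := Matrix.rank_transpose M
    apply Submodule.eq_top_of_finrank_eq
    rw [finrank_pi, Fintype.card_fin]
    omega
  obtain ⟨b, hbsub, hbspan, hbind⟩ := exists_linearIndependent k (Set.range col)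
  rw [hcol] at hbspan
  have hbfin : b.Finite := hbind.setFinite
  haveI : Fintype b := hbfin.fintype
  have hbbasis : Basis b k (Fin t → k) := Basis.mk hbind (by rw [Subtype.range_coe, hbspan])
  have hcardb : Fintype.card b = t := by
    have := finrank_eq_card_basis hbbasis
    rw [finrank_pi, Fintype.card_fin] at this
    omega
  have hchoice : ∀ x : b, ∃ y : Fin N, col y = (x : Fin t → k) := fun x => hbsub x.2
  choose K hK using hchoice
  set β : (Fin t → k) →ₗ[k] (b → k) :=
    { toFun := fun a x => ∑ s, (x : Fin t → k) s * a s
      map_add' := by intro a a'; funext x; simp [mul_add, Finset.sum_add_distrib]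
      map_smul' := by intro r a; funext x; simp [Finset.mul_sum, mul_left_comm] } with hβ
  have hβinj : Function.Injective β := by
    rw [← LinearMap.ker_eq_bot, LinearMap.ker_eq_bot']
    intro a ha
    have hvan : ∀ u ∈ b, ∑ s, u s * a s = 0 := by
      intro u hu
      exact congrFun ha ⟨u, hu⟩
    set γ : (Fin t → k) →ₗ[k] k :=
      { toFun := fun u => ∑ s, u s * a s
        map_add' := by intro u u'; simp [add_mul, Finset.sum_add_distrib]
        map_smul' := by intro r u; simp [Finset.mul_sum, mul_assoc] } with hγ
    have hγtop : ∀ u : Fin t → k, γ u = 0 := by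
      intro u
      have hle : span k b ≤ LinearMap.ker γ := Submodule.span_le.2 (fun u hu => hvan u hu)
      rw [hbspan] at hle
      exact LinearMap.mem_ker.1 (hle Submodule.mem_top)
    funext s
    have := hγtop (Pi.single s 1)
    simpa [hγ, Pi.single_apply, Finset.sum_ite_eq'] using this
  have hβsurj : Function.Surjective β := by
    rw [← LinearMap.injective_iff_surjective_of_finrank_eq_finrank (f := β)]
    · exact hβinj
    · rw [finrank_pi, finrank_pi]
      simp [hcardb]
  have hpowind : LinearIndependent k (fun x : b => v (K x)) := by
    rw [Fintype.linearIndependent_iff]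
    intro gcoef hsum x₀
    obtain ⟨a₀, ha₀⟩ := hβsurj (Pi.single x₀ 1)
    have heval : ∀ x : b, eval a₀ (L (K x)) = if x = x₀ then 1 else 0 := by
      intro x
      have h1 : eval a₀ (L (K x)) = ∑ s, w s (K x) * a₀ s := by
        rw [hL]
        simp [eval_sum]
      have h2 : ∀ s, w s (K x) = (x : Fin t → k) s := fun s => congrFun (hK x) s
      rw [h1]
      simp_rw [h2]
      have := congrFun ha₀ x
      rw [hβ] at this
      simp only [LinearMap.coe_mk, AddHom.coe_mk] at this
      rw [this, Pi.single_apply]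
    have h3 := congrArg (eval a₀) hsum
    rw [map_sum, map_zero] at h3
    have h4 : ∀ x : b, eval a₀ (gcoef x • v (K x)) = if x = x₀ then gcoef x else 0 := by
      intro x
      rw [hv, smul_eq_C_mul]
      simp only [map_mul, map_pow, eval_C, heval x]
      by_cases hx : x = x₀
      · simp [hx]
      · simp [hx, zero_pow (show j - 1 ≠ 0 by omega)]
    rw [Finset.sum_congr rfl (fun x _ => h4 x), Finset.sum_ite_eq' Finset.univ x₀ gcoef,
      if_pos (Finset.mem_univ _)] at h3
    exact h3
  have htrange : t ≤ finrank k (LinearMap.range Φ) := by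
    rw [hΦ, Fintype.range_linearCombination]
    haveI : FiniteDimensional k (span k (Set.range v)) :=
      FiniteDimensional.span_of_finite k (Set.finite_range v)
    have hmem : ∀ x : b, v (K x) ∈ span k (Set.range v) :=
      fun x => Submodule.subset_span ⟨K x, rfl⟩
    have hind' : LinearIndependent k (fun x : b => (⟨v (K x), hmem x⟩ : span k (Set.range v))) := by
      apply LinearIndependent.of_comp (span k (Set.range v)).subtype
      exact hpowind
    have := hind'.fintype_card_le_finrank
    rwa [hcardb] at this
  have hrn := LinearMap.finrank_range_add_finrank_ker Φ
  rw [finrank_pi, Fintype.card_fin] at hrn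
  omega

end GapAux

/-- For any `2 ≤ i ≤ d - 2`, there are forms `f` of degree `i` and `g` of degree `d - i`
such that `f * g` has strength `1` but slice rank `⌈(n+1)/2⌉`. -/
theorem gap_strength_sliceRank {k : Type*} [Field k] [IsAlgClosed k] [CharZero k]
    {n d i : ℕ} (hi : 2 ≤ i) (hid : i ≤ d - 2) (hd : 4 ≤ d) :
    ∃ f g : MvPolynomial (Fin (n + 1)) k,
      f.IsHomogeneous i ∧ g.IsHomogeneous (d - i) ∧
      strength d (f * g) = 1 ∧ sliceRank d (f * g) = (n + 2) / 2 := by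
  classical
  open Module Submodule in
  have hdi2 : 2 ≤ d - i := by omega
  set f : MvPolynomial (Fin (n+1)) k := ∑ x : Fin (n+1), X x ^ i with hfdef
  set g : MvPolynomial (Fin (n+1)) k := ∑ x : Fin (n+1), X x ^ (d - i) with hgdef
  have hf : f.IsHomogeneous i :=
    IsHomogeneous.sum _ _ _ (fun x _ => isHomogeneous_X_pow x i)
  have hg : g.IsHomogeneous (d - i) :=
    IsHomogeneous.sum _ _ _ (fun x _ => isHomogeneous_X_pow x (d - i))
  have hne : ∀ e : ℕ, (∑ x : Fin (n+1), X x ^ e : MvPolynomial (Fin (n+1)) k) ≠ 0 := by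
    intro e hzero
    have h1 := congrArg (eval (fun _ => (1 : k))) hzero
    rw [map_sum, map_zero] at h1
    simp only [map_pow, eval_X, one_pow] at h1
    rw [Finset.sum_const, Finset.card_univ, Fintype.card_fin, nsmul_eq_mul, mul_one] at h1
    exact Nat.cast_ne_zero.2 (Nat.succ_ne_zero n) h1
  have hfne : f ≠ 0 := hne i
  have hgne : g ≠ 0 := hne (d - i)
  have hfgne : f * g ≠ 0 := mul_ne_zero hfne hgne
  refine ⟨f, g, hf, hg, ?_, ?_⟩
  · -- strength = 1
    have mem1 : (1 : ℕ) ∈ {r : ℕ | ∃ (g' h' : Fin r → MvPolynomial (Fin (n+1)) k)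
        (e : Fin r → ℕ), (∀ m, 1 ≤ e m ∧ e m ≤ d - 1) ∧
        (∀ m, (g' m).IsHomogeneous (e m)) ∧ (∀ m, (h' m).IsHomogeneous (d - e m)) ∧
        f * g = ∑ m, g' m * h' m} := by
      refine ⟨fun _ => f, fun _ => g, fun _ => i,
        fun _ => ⟨show 1 ≤ i by omega, show i ≤ d - 1 by omega⟩,
        fun _ => hf, fun _ => hg, ?_⟩
      rw [Fin.sum_univ_one]
    unfold strength
    apply le_antisymm (Nat.sInf_le mem1)
    have h0 : sInf {r : ℕ | ∃ (g' h' : Fin r → MvPolynomial (Fin (n+1)) k)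
        (e : Fin r → ℕ), (∀ m, 1 ≤ e m ∧ e m ≤ d - 1) ∧
        (∀ m, (g' m).IsHomogeneous (e m)) ∧ (∀ m, (h' m).IsHomogeneous (d - e m)) ∧
        f * g = ∑ m, g' m * h' m} ≠ 0 := by
      intro hz
      rw [Nat.sInf_eq_zero] at hz
      rcases hz with ⟨g', h', e, _, _, _, heq⟩ | hemp
      · rw [Finset.univ_eq_empty, Finset.sum_empty] at heq
        exact hfgne heq
      · rw [Set.eq_empty_iff_forall_notMem] at hemp
        exact hemp 1 mem1
    exact Nat.one_le_iff_ne_zero.2 h0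
  · -- sliceRank = (n+2)/2
    set r₀ : ℕ := (n + 2) / 2 with hr₀
    obtain ⟨c, hc⟩ := IsAlgClosed.exists_pow_nat_eq (-1 : k) (show 0 < i by omega)
    set F : ℕ → MvPolynomial (Fin (n+1)) k :=
      fun jj => if h : jj < n + 1 then X (⟨jj, h⟩ : Fin (n+1)) ^ i else 0 with hF
    have hfF : f = ∑ m ∈ Finset.range r₀, (F (2*m) + F (2*m+1)) := by
      have h1 : f = ∑ jj ∈ Finset.range (n+1), F jj := by
        rw [hfdef, ← Fin.sum_univ_eq_sum_range]
        apply Finset.sum_congr rfl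
        intro x _
        simp only [hF]
        rw [dif_pos x.isLt]
      have h2 : ∑ jj ∈ Finset.range (2*r₀), F jj = ∑ jj ∈ Finset.range (n+1), F jj := by
        have hcase : 2*r₀ = n+1 ∨ 2*r₀ = n+2 := by omega
        rcases hcase with h | h
        · rw [h]
        · rw [h, show n + 2 = (n+1) + 1 from rfl, Finset.sum_range_succ]
          simp only [hF]
          rw [dif_neg (by omega), add_zero]
      rw [h1, ← h2, GapAux.sum_range_two_mul]
    set ℓp : Fin r₀ → MvPolynomial (Fin (n+1)) k := fun m =>
      if h : 2*(m:ℕ)+1 < n+1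
      then X (⟨2*m, by omega⟩ : Fin (n+1)) + C (-c) * X (⟨2*m+1, h⟩ : Fin (n+1))
      else X (⟨2*m, by have := m.isLt; omega⟩ : Fin (n+1)) with hℓp
    set qp : Fin r₀ → MvPolynomial (Fin (n+1)) k := fun m =>
      (if h : 2*(m:ℕ)+1 < n+1
      then (∑ p ∈ Finset.range i, X (⟨2*m, by omega⟩ : Fin (n+1)) ^ p *
        (C c * X (⟨2*m+1, h⟩ : Fin (n+1))) ^ (i-1-p))
      else X (⟨2*m, by have := m.isLt; omega⟩ : Fin (n+1)) ^ (i-1)) * g with hqp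
    have hprod : ∀ m : Fin r₀, ℓp m * qp m = (F (2*(m:ℕ)) + F (2*(m:ℕ)+1)) * g := by
      intro m
      simp only [hℓp, hqp, hF]
      by_cases h : 2*(m:ℕ)+1 < n+1
      · rw [dif_pos h, dif_pos h, dif_pos (show 2*(m:ℕ) < n+1 by omega), dif_pos h]
        set a : Fin (n+1) := ⟨2*(m:ℕ), by omega⟩
        set b : Fin (n+1) := ⟨2*(m:ℕ)+1, h⟩
        have e1 : (X a : MvPolynomial (Fin (n+1)) k) + C (-c) * X b = X a - C c * X b := by
          rw [map_neg]; ring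
        have e2 := geom_sum₂_mul (X a : MvPolynomial (Fin (n+1)) k) (C c * X b) i
        have e3 : ((C c : MvPolynomial (Fin (n+1)) k) * X b) ^ i = - (X b ^ i) := by
          rw [mul_pow, ← map_pow, hc, map_neg, map_one]; ring
        calc (X a + C (-c) * X b) *
              ((∑ p ∈ Finset.range i, X a ^ p * (C c * X b) ^ (i-1-p)) * g)
            = ((∑ p ∈ Finset.range i, X a ^ p * (C c * X b) ^ (i-1-p)) *
                (X a - C c * X b)) * g := by rw [e1]; ring
          _ = (X a ^ i - (C c * X b) ^ i) * g := by rw [e2]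
          _ = (X a ^ i + X b ^ i) * g := by rw [e3]; ring
      · rw [dif_neg h, dif_neg h,
          dif_pos (show 2*(m:ℕ) < n+1 from by have := m.isLt; omega), dif_neg (by omega)]
        set a : Fin (n+1) := ⟨2*(m:ℕ), by have := m.isLt; omega⟩
        have e1 : (X a : MvPolynomial (Fin (n+1)) k) * X a ^ (i-1) = X a ^ i := by
          rw [← pow_succ']
          congr 1
          omega
        rw [add_zero, ← mul_assoc, e1]
    have hℓhom : ∀ m, (ℓp m).IsHomogeneous 1 := by
      intro m
      simp only [hℓp]
      split_ifs with h
      · exact (isHomogeneous_X _ _).add (isHomogeneous_C_mul_X _ _)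
      · exact isHomogeneous_X _ _
    have hqhom : ∀ m, (qp m).IsHomogeneous (d - 1) := by
      intro m
      simp only [hqp]
      rw [show d - 1 = (i-1) + (d-i) by omega]
      apply IsHomogeneous.mul _ hg
      split_ifs with h
      · apply IsHomogeneous.sum
        intro p hp
        have hp' : p < i := Finset.mem_range.1 hp
        have h1 : ((C c * X (⟨2*(m:ℕ)+1, h⟩ : Fin (n+1))) ^ (i-1-p) :
            MvPolynomial (Fin (n+1)) k).IsHomogeneous (i-1-p) := by
          have := (isHomogeneous_C_mul_X c (⟨2*(m:ℕ)+1, h⟩ : Fin (n+1))).pow (i-1-p)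
          rwa [one_mul] at this
        have h2 := (isHomogeneous_X_pow (R := k) (⟨2*(m:ℕ), by omega⟩ : Fin (n+1)) p).mul h1
        rwa [show p + (i-1-p) = i-1 by omega] at h2
      · exact isHomogeneous_X_pow _ _
    have mem : r₀ ∈ {r : ℕ | ∃ ℓ g' : Fin r → MvPolynomial (Fin (n+1)) k,
        (∀ m, (ℓ m).IsHomogeneous 1) ∧ (∀ m, (g' m).IsHomogeneous (d - 1)) ∧
        f * g = ∑ m, ℓ m * g' m} := by
      refine ⟨ℓp, qp, hℓhom, hqhom, ?_⟩
      calc f * g = (∑ mm ∈ Finset.range r₀, (F (2*mm) + F (2*mm+1))) * g := by rw [← hfF]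
        _ = ∑ mm ∈ Finset.range r₀, ((F (2*mm) + F (2*mm+1)) * g) := Finset.sum_mul _ _ _
        _ = ∑ m : Fin r₀, ((F (2*(m:ℕ)) + F (2*(m:ℕ)+1)) * g) :=
            (Fin.sum_univ_eq_sum_range (fun mm => (F (2*mm) + F (2*mm+1)) * g) r₀).symm
        _ = ∑ m, ℓp m * qp m := Finset.sum_congr rfl fun m _ => (hprod m).symm
    have hlow : ∀ r ∈ {r : ℕ | ∃ ℓ g' : Fin r → MvPolynomial (Fin (n+1)) k,
        (∀ m, (ℓ m).IsHomogeneous 1) ∧ (∀ m, (g' m).IsHomogeneous (d - 1)) ∧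
        f * g = ∑ m, ℓ m * g' m}, r₀ ≤ r := by
      rintro r ⟨ℓ', q', hℓ', hq', heq⟩
      by_contra hlt
      push_neg at hlt
      have hrn : 2*r ≤ n := by omega
      set A : (Fin (n+1) → k) →ₗ[k] (Fin r → k) :=
        { toFun := fun v mm => ∑ x, coeff (Finsupp.single x 1) (ℓ' mm) * v x
          map_add' := by intro v v'; funext mm; simp [mul_add, Finset.sum_add_distrib]
          map_smul' := by
            intro a v; funext mm; simp only [Pi.smul_apply, smul_eq_mul, RingHom.id_apply]
            rw [Finset.mul_sum]
            apply Finset.sum_congr rfl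
            intros; ring } with hA
      set W := LinearMap.ker A with hW
      set t := finrank k W with ht
      have htge : n + 1 - r ≤ t := by
        have h1 := LinearMap.finrank_range_add_finrank_ker A
        rw [finrank_pi, Fintype.card_fin, ← hW] at h1
        have h2 := Submodule.finrank_le (LinearMap.range A)
        rw [finrank_pi, Fintype.card_fin] at h2
        omega
      set B := Module.finBasis k W with hB
      set w : Fin t → (Fin (n+1) → k) := fun s => (B s : Fin (n+1) → k) with hwdef
      have hwind : LinearIndependent k w :=
        B.linearIndependent.map' W.subtype (Submodule.ker_subtype W)
      have hwker : ∀ s, A (w s) = 0 := fun s => LinearMap.mem_ker.1 (B s).2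
      set L : Fin (n+1) → MvPolynomial (Fin t) k :=
        fun x => ∑ s : Fin t, C (w s x) * X s with hLdef
      set ψ : MvPolynomial (Fin (n+1)) k →ₐ[k] MvPolynomial (Fin t) k := aeval L with hψ
      have hψlin : ∀ m, ψ (ℓ' m) = 0 := by
        intro m
        rw [GapAux.eq_sum_of_isHomogeneous_one (hℓ' m), map_sum]
        have h1 : ∀ x, ψ (C (coeff (Finsupp.single x 1) (ℓ' m)) * X x)
            = C (coeff (Finsupp.single x 1) (ℓ' m)) * L x := by
          intro x
          rw [map_mul, aeval_C, aeval_X, MvPolynomial.algebraMap_eq]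
        rw [Finset.sum_congr rfl fun x _ => h1 x]
        calc ∑ x, C (coeff (Finsupp.single x 1) (ℓ' m)) * L x
            = ∑ s : Fin t, C (∑ x, coeff (Finsupp.single x 1) (ℓ' m) * w s x) * X s := by
              simp only [hLdef]
              simp_rw [Finset.mul_sum, ← mul_assoc, ← C_mul]
              rw [Finset.sum_comm]
              exact Finset.sum_congr rfl fun s _ => by rw [← Finset.sum_mul, ← map_sum]
          _ = 0 := by
              apply Finset.sum_eq_zero
              intro s _
              have h3 : A (w s) m = 0 := by rw [hwker s]; rfl
              have h4 : ∑ x, coeff (Finsupp.single x 1) (ℓ' m) * w s x = 0 := h3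
              rw [h4, map_zero, zero_mul]
      have hzero : ψ f * ψ g = 0 := by
        rw [← map_mul, heq, map_sum]
        apply Finset.sum_eq_zero
        intro m _
        rw [map_mul, hψlin m, zero_mul]
      have hψpow : ∀ e : ℕ, ψ (∑ x : Fin (n+1), X x ^ e) = ∑ x : Fin (n+1), (L x) ^ e := by
        intro e
        rw [map_sum]
        exact Finset.sum_congr rfl fun x _ => by rw [map_pow, hψ, aeval_X]
      rcases mul_eq_zero.mp hzero with hz | hz
      · rw [hfdef, hψpow i] at hz
        simp only [hLdef] at hz
        have := GapAux.key hi w hwind hz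
        omega
      · rw [hgdef, hψpow (d - i)] at hz
        simp only [hLdef] at hz
        have := GapAux.key hdi2 w hwind hz
        omega
    unfold sliceRank
    exact le_antisymm (Nat.sInf_le mem) (le_csInf ⟨r₀, mem⟩ hlow)
end

section
/- Let n ≥ 1, d ≥ 4 with n ≥ (1/d!)·max{d^{d−1}, ((d−1)!)^{(d−1)/(d−3)}}, and let a be the unique positive root of p(x) = (x+d)⋯(x+2) − d!·(n−x). Then a > (d!·n)^{1/(d−1)} − (d+2). -/
/-- For `d ≥ 4` and `n ≥ (1/d!)·max{d^{d−1}, ((d−1)!)^{(d−1)/(d−3)}}`, the unique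
positive root `a` of `p(x) = (x+d)⋯(x+2) − d!·(n−x)` satisfies
`a > (d!·n)^{1/(d−1)} − (d+2)`. -/
theorem root_lower_bound (n d : ℕ) (hn : 1 ≤ n) (hd : 4 ≤ d)
    (hbig : ((1 : ℝ) / (d.factorial : ℝ)) *
        max ((d : ℝ) ^ ((d : ℝ) - 1))
          (((d - 1).factorial : ℝ) ^ (((d : ℝ) - 1) / ((d : ℝ) - 3))) ≤ (n : ℝ))
    (a : ℝ) (ha : 0 < a)
    (hroot : (∏ m ∈ Finset.Icc 2 d, (a + (m : ℝ)))
      - (d.factorial : ℝ) * ((n : ℝ) - a) = 0) :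
    ((d.factorial : ℝ) * n) ^ ((1 : ℝ) / ((d : ℝ) - 1)) - ((d : ℝ) + 2) < a := by
  have hdR : (4:ℝ) ≤ (d:ℝ) := by exact_mod_cast hd
  set D : ℝ := (d.factorial : ℝ) with hDdef
  have hD : (0:ℝ) < D := by positivity
  have hn' : (0:ℝ) < (n:ℝ) := by exact_mod_cast hn
  have hDn : (0:ℝ) < D * n := by positivity
  have hd1 : (0:ℝ) < (d:ℝ) - 1 := by linarith
  have hd3 : (0:ℝ) < (d:ℝ) - 3 := by linarith
  have hmax : max ((d : ℝ) ^ ((d : ℝ) - 1))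
      (((d - 1).factorial : ℝ) ^ (((d : ℝ) - 1) / ((d : ℝ) - 3))) ≤ D * n := by
    rw [one_div_mul_eq_div, div_le_iff₀ hD] at hbig
    linarith [hbig]
  have h1 : (d : ℝ) ^ ((d : ℝ) - 1) ≤ D * n := le_trans (le_max_left _ _) hmax
  have h2 : ((d - 1).factorial : ℝ) ^ (((d : ℝ) - 1) / ((d : ℝ) - 3)) ≤ D * n :=
    le_trans (le_max_right _ _) hmax
  set y : ℝ := (D * n) ^ ((1 : ℝ) / ((d : ℝ) - 1)) with hydef
  have hy0 : 0 < y := Real.rpow_pos_of_pos hDn _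
  have hyd : (d:ℝ) ≤ y := by
    calc (d:ℝ) = ((d:ℝ) ^ ((d:ℝ)-1)) ^ ((1:ℝ)/((d:ℝ)-1)) := by
          rw [← Real.rpow_mul (by positivity : (0:ℝ) ≤ (d:ℝ)), mul_one_div,
            div_self hd1.ne', Real.rpow_one]
      _ ≤ y := Real.rpow_le_rpow (by positivity) h1 (by positivity)
  -- y ^ (d-1) = D * n
  have hypow : y ^ ((d:ℝ) - 1) = D * n := by
    rw [hydef, ← Real.rpow_mul hDn.le, one_div, inv_mul_cancel₀ hd1.ne', Real.rpow_one]
  have e1 : y ^ (d - 1) = D * n := by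
    rw [← hypow, ← Real.rpow_natCast y (d - 1)]
    congr 1
    have : ((d - 1 : ℕ) : ℝ) = (d:ℝ) - 1 := by
      have : 1 ≤ d := by omega
      push_cast [Nat.cast_sub this]; ring
    rw [this]
  -- (d-1)! ≤ y ^ (d-3)
  have hfact : ((d - 1).factorial : ℝ) ≤ y ^ ((d:ℝ) - 3) := by
    have hstep := Real.rpow_le_rpow (by positivity) h2
      (le_of_lt (div_pos hd3 hd1))
    calc ((d - 1).factorial : ℝ)
        = (((d - 1).factorial : ℝ) ^ (((d:ℝ)-1)/((d:ℝ)-3))) ^ (((d:ℝ)-3)/((d:ℝ)-1)) := by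
          rw [← Real.rpow_mul (by positivity), div_mul_div_comm,
            mul_comm ((d:ℝ)-1), div_self (by positivity), Real.rpow_one]
      _ ≤ (D * n) ^ (((d:ℝ)-3)/((d:ℝ)-1)) := hstep
      _ = y ^ ((d:ℝ)-3) := by
          rw [hydef, ← Real.rpow_mul hDn.le, one_div, inv_mul_eq_div]
  have e3 : ((d - 1).factorial : ℝ) ≤ y ^ (d - 3) := by
    rw [← Real.rpow_natCast y (d - 3)]
    have hc : ((d - 3 : ℕ) : ℝ) = (d:ℝ) - 3 := by
      have : 3 ≤ d := by omega
      push_cast [Nat.cast_sub this]; ring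
    rw [hc]; exact hfact
  -- set x0
  set x0 : ℝ := y - ((d:ℝ) + 2) with hx0def
  show x0 < a
  rcases le_or_gt x0 0 with hx0 | hx0
  · linarith
  -- key: p(x0) < 0
  have hDsplit : D = (d:ℝ) * ((d - 1).factorial : ℝ) := by
    have hNat : d.factorial = d * (d - 1).factorial := by
      conv_lhs => rw [show d = (d - 1) + 1 by omega]
      rw [Nat.factorial_succ]
      congr 2
      omega
    rw [hDdef, hNat]
    push_cast
    ring
  have hpowid2 : y ^ (d - 1) = y ^ (d - 2) * y := by
    rw [← pow_succ]; congr 1; omega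
  have hpowid3 : y ^ (d - 2) = y ^ (d - 3) * y := by
    rw [← pow_succ]; congr 1; omega
  -- product bound
  have h2mem : 2 ∈ Finset.Icc 2 d := by simp; omega
  have hprodsplit : (∏ m ∈ Finset.Icc 2 d, (x0 + (m:ℝ)))
      = (x0 + 2) * ∏ m ∈ (Finset.Icc 2 d).erase 2, (x0 + (m:ℝ)) := by
    rw [← Finset.mul_prod_erase (Finset.Icc 2 d) (fun m => x0 + (m:ℝ)) h2mem]
    norm_num
  have hcard : ((Finset.Icc 2 d).erase 2).card = d - 2 := by
    rw [Finset.card_erase_of_mem h2mem, Nat.card_Icc]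
    omega
  have hprodbound : (∏ m ∈ (Finset.Icc 2 d).erase 2, (x0 + (m:ℝ))) ≤ y ^ (d - 2) := by
    calc (∏ m ∈ (Finset.Icc 2 d).erase 2, (x0 + (m:ℝ)))
        ≤ ∏ m ∈ (Finset.Icc 2 d).erase 2, y := by
          apply Finset.prod_le_prod
          · intro m hm
            have hm' : 2 ≤ m := (Finset.mem_Icc.mp (Finset.mem_of_mem_erase hm)).1
            have : (2:ℝ) ≤ (m:ℝ) := by exact_mod_cast hm'
            linarith
          · intro m hm
            have hm' : m ≤ d := (Finset.mem_Icc.mp (Finset.mem_of_mem_erase hm)).2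
            have : (m:ℝ) ≤ (d:ℝ) := by exact_mod_cast hm'
            rw [hx0def]
            linarith
      _ = y ^ (d - 2) := by rw [Finset.prod_const, hcard]
  have hkey : (∏ m ∈ Finset.Icc 2 d, (x0 + (m:ℝ))) - D * ((n:ℝ) - x0) < 0 := by
    have hx02 : x0 + 2 = y - (d:ℝ) := by rw [hx0def]; ring
    have hb : (∏ m ∈ Finset.Icc 2 d, (x0 + (m:ℝ))) ≤ (y - (d:ℝ)) * y ^ (d - 2) := by
      rw [hprodsplit, hx02]
      have hyd' : 0 ≤ y - (d:ℝ) := by linarith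
      exact mul_le_mul_of_nonneg_left hprodbound hyd'
    have hident : (y - (d:ℝ)) * y ^ (d - 2) - D * ((n:ℝ) - x0)
        = (d:ℝ) * y * (((d - 1).factorial : ℝ) - y ^ (d - 3)) - D * ((d:ℝ) + 2) := by
      rw [hx0def]
      linear_combination e1 - hpowid2 - (d:ℝ) * hpowid3 + y * hDsplit
    have hneg : (d:ℝ) * y * (((d - 1).factorial : ℝ) - y ^ (d - 3)) ≤ 0 := by
      apply mul_nonpos_of_nonneg_of_nonpos
      · positivity
      · linarith
    nlinarith [hD, hdR]
  -- monotonicity: suppose a ≤ x0, derive contradiction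
  by_contra hcon
  push_neg at hcon
  have hmono : (∏ m ∈ Finset.Icc 2 d, (a + (m:ℝ))) ≤ ∏ m ∈ Finset.Icc 2 d, (x0 + (m:ℝ)) := by
    apply Finset.prod_le_prod
    · intro m hm
      have : (0:ℝ) ≤ (m:ℝ) := by positivity
      linarith
    · intro m hm
      linarith
  have : D * ((n:ℝ) - x0) ≤ D * ((n:ℝ) - a) := by
    apply mul_le_mul_of_nonneg_left _ hD.le
    linarith
  linarith [hroot, hkey, hmono]
end

section
/- For all n ≥ 1, the general slice rank satisfies sl.rk°_{n,d} ≤ sl.rk°_{n+1,d} ≤ sl.rk°_{n,d} + 1, where sl.rk°_{n,d} = min{ r ≥ 0 : r(n+1−r) ≥ C(d+n−r, d) }; consequently n ↦ n − sl.rk°_{n,d} + 1 is non-decreasing in n. -/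
/-- The general slice rank `sl.rk°_{n,d} = min { r : r(n+1−r) ≥ C(d+n−r, d) }`. -/
noncomputable def genSliceRank (n d : ℕ) : ℕ :=
  sInf {r : ℕ | Nat.choose (d + n - r) d ≤ r * (n + 1 - r)}

lemma genSliceRank_set_nonempty (n d : ℕ) (hd : 1 ≤ d) :
    {r : ℕ | Nat.choose (d + n - r) d ≤ r * (n + 1 - r)}.Nonempty := by
  refine ⟨n + 1, ?_⟩
  have h1 : d + n - (n + 1) = d - 1 := by omega
  simp [Set.mem_setOf_eq, h1, Nat.choose_eq_zero_of_lt (show d - 1 < d by omega)]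

/-- `sl.rk°_{n,d} ≤ sl.rk°_{n+1,d} ≤ sl.rk°_{n,d} + 1`; consequently
`n ↦ n − sl.rk°_{n,d} + 1` is non-decreasing in `n`. -/
theorem genSliceRank_monotone (n d : ℕ) (hn : 1 ≤ n) (hd : 3 ≤ d) :
    genSliceRank n d ≤ genSliceRank (n + 1) d ∧
    genSliceRank (n + 1) d ≤ genSliceRank n d + 1 ∧
    (n : ℤ) - genSliceRank n d + 1 ≤ ((n : ℤ) + 1) - genSliceRank (n + 1) d + 1 := by
  have hmem : genSliceRank (n + 1) d ∈
      {r : ℕ | Nat.choose (d + (n + 1) - r) d ≤ r * ((n + 1) + 1 - r)} :=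
    Nat.sInf_mem (genSliceRank_set_nonempty (n + 1) d (by omega))
  have hmem' : genSliceRank n d ∈
      {r : ℕ | Nat.choose (d + n - r) d ≤ r * (n + 1 - r)} :=
    Nat.sInf_mem (genSliceRank_set_nonempty n d (by omega))
  have h2 : genSliceRank (n + 1) d ≤ genSliceRank n d + 1 := by
    apply Nat.sInf_le
    set r := genSliceRank n d with hrdef
    have hr : Nat.choose (d + n - r) d ≤ r * (n + 1 - r) := hmem'
    show Nat.choose (d + (n + 1) - (r + 1)) d ≤ (r + 1) * ((n + 1) + 1 - (r + 1))
    have e1 : d + (n + 1) - (r + 1) = d + n - r := by omega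
    have e2 : (n + 1) + 1 - (r + 1) = n + 1 - r := by omega
    rw [e1, e2]
    calc Nat.choose (d + n - r) d ≤ r * (n + 1 - r) := hr
      _ ≤ (r + 1) * (n + 1 - r) := Nat.mul_le_mul_right _ (by omega)
  have h1 : genSliceRank n d ≤ genSliceRank (n + 1) d := by
    apply Nat.sInf_le
    set r := genSliceRank (n + 1) d with hrdef
    have hr : Nat.choose (d + (n + 1) - r) d ≤ r * ((n + 1) + 1 - r) := hmem
    show Nat.choose (d + n - r) d ≤ r * (n + 1 - r)
    by_cases hc : n + 1 ≤ r
    · have hlt : d + n - r < d := by omega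
      simp [Nat.choose_eq_zero_of_lt hlt]
    · push_neg at hc
      have hid := Nat.choose_mul_succ_eq (d + n - r) d
      have e1 : d + n - r + 1 = d + (n + 1) - r := by omega
      have e2 : d + (n + 1) - r - d = n + 1 - r := by omega
      rw [e1, e2] at hid
      have key : Nat.choose (d + n - r) d * (d + (n + 1) - r)
          ≤ r * (n + 1 - r) * (d + (n + 1) - r) := by
        rw [hid]
        calc Nat.choose (d + (n + 1) - r) d * (n + 1 - r)
            ≤ r * ((n + 1) + 1 - r) * (n + 1 - r) := Nat.mul_le_mul_right _ hr
          _ = r * (n + 1 - r) * ((n + 1) + 1 - r) := by ring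
          _ ≤ r * (n + 1 - r) * (d + (n + 1) - r) :=
              Nat.mul_le_mul_left _ (by omega)
      exact Nat.le_of_mul_le_mul_right key (by omega)
  exact ⟨h1, h2, by omega⟩
end
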